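/- Let S be a regular tetrahedron uvwz in ℍ³ with edge length 2x, m the midpoint of edge uv, n the midpoint of edge wz, and H the plane through uv orthogonal to the segment mn. Then width_H(S) = arcsinh( sinh( arccosh( cosh(2x)/cosh²x ) ) · cosh x ). -/

import Mathlib

noncomputable section

namespace HypSpace

/-- Inverse hyperbolic cosine. -/
def arcosh (x : ℝ) : ℝ := Real.log (x + Real.sqrt (x ^ 2 - 1))

/-- The Minkowski bilinear form on `ℝ^{d+1}` (signature `(d,1)`, the last
coordinate being timelike). -/
def mink (d : ℕ) (x y : EuclideanSpace ℝ (Fin (d + 1))) : ℝ :=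
  (∑ i : Fin d, x i.castSucc * y i.castSucc) - x (Fin.last d) * y (Fin.last d)

/-- The hyperboloid model of `d`-dimensional hyperbolic space: the upper sheet
of the two-sheeted hyperboloid `mink x x = -1`. -/
def Pt (d : ℕ) : Type := {x : EuclideanSpace ℝ (Fin (d + 1)) // mink d x x = -1 ∧ 0 < x (Fin.last d)}

variable {d : ℕ}

/-- Hyperbolic distance between two points of `ℍ^d`. -/
def hdist (p q : Pt d) : ℝ := arcosh (-(mink d p.1 q.1))

/-- The geodesic segment between `a` and `b`, described metrically via betweenness
(hyperbolic space is uniquely geodesic). -/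
def seg (a b : Pt d) : Set (Pt d) := {p | hdist a p + hdist p b = hdist a b}

/-- A set is (geodesically) convex if it contains the segment between any two of its points. -/
def IsConvexSet (C : Set (Pt d)) : Prop := ∀ a ∈ C, ∀ b ∈ C, seg a b ⊆ C

/-- The convex hull: the smallest convex set containing `A`. -/
def chull (A : Set (Pt d)) : Set (Pt d) := ⋂₀ {C | IsConvexSet C ∧ A ⊆ C}

/-- The totally geodesic hyperplane with (spacelike) normal vector `v`. -/
def plane (v : EuclideanSpace ℝ (Fin (d + 1))) : Set (Pt d) := {p | mink d v p.1 = 0}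

/-- A hyperplane of `ℍ^d`: the trace on the hyperboloid of a linear hyperplane
with spacelike unit normal. -/
def IsHyperplane (H : Set (Pt d)) : Prop := ∃ v, mink d v v = 1 ∧ H = plane v

/-- Distance from a point to a set. -/
def distPS (p : Pt d) (S : Set (Pt d)) : ℝ := sInf (hdist p '' S)

/-- Distance between two sets. -/
def distSS (A B : Set (Pt d)) : ℝ := sInf {r | ∃ a ∈ A, ∃ b ∈ B, hdist a b = r}

/-- `h` is the orthogonal projection of `g` onto `H`: the point of `H`
realizing the distance from `g` to `H`.  For a hyperplane `H` with `a ∈ H`,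
`IsProj b H a` also expresses that `H` is orthogonal to the segment `ab` at `a`. -/
def IsProj (g : Pt d) (H : Set (Pt d)) (h : Pt d) : Prop :=
  h ∈ H ∧ ∀ k ∈ H, hdist g h ≤ hdist g k

/-- Two hyperplanes are ultraparallel if they are disjoint and not asymptotically
parallel (their distance is positive, i.e. they admit a common perpendicular). -/
def Ultraparallel (H J : Set (Pt d)) : Prop :=
  IsHyperplane H ∧ IsHyperplane J ∧ H ∩ J = ∅ ∧ 0 < distSS H J

/-- `p` is an interior point of `C`. -/
def IsIntr (C : Set (Pt d)) (p : Pt d) : Prop := ∃ ε > 0, ∀ q, hdist p q < ε → q ∈ C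

/-- `p` is a boundary point of the (closed) set `C`. -/
def IsBdry (C : Set (Pt d)) (p : Pt d) : Prop := p ∈ C ∧ ¬ IsIntr C p

/-- `C` is bounded. -/
def IsBddSet (C : Set (Pt d)) : Prop := ∃ R, ∀ a ∈ C, ∀ b ∈ C, hdist a b ≤ R

/-- `C` is closed. -/
def IsClosedSet (C : Set (Pt d)) : Prop :=
  ∀ p : Pt d, (∀ ε > 0, ∃ q ∈ C, hdist p q < ε) → p ∈ C

/-- A convex body: a compact (closed and bounded) convex set with nonempty interior. -/
def IsBody (C : Set (Pt d)) : Prop :=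
  IsConvexSet C ∧ IsBddSet C ∧ IsClosedSet C ∧ ∃ p, IsIntr C p

/-- The hyperplane `H` supports `C`: it meets `C` but misses its interior. -/
def Supports (H C : Set (Pt d)) : Prop :=
  IsHyperplane H ∧ (H ∩ C).Nonempty ∧ ∀ p, IsIntr C p → p ∉ H

/-- The width of `C` determined by `H`, as the maximum distance from `H`
to a point of `C`. -/
def width (H C : Set (Pt d)) : ℝ := sSup ((fun c => distPS c H) '' C)

/-- The width of `C` determined by `H`, as the distance from `H` to a farthest
supporting hyperplane of `C` ultraparallel to `H`. -/
def widthUP (H C : Set (Pt d)) : ℝ :=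
  sSup {r | ∃ J, Supports J C ∧ Ultraparallel H J ∧ distSS H J = r}

/-- The thickness of `C`: the minimum width over supporting hyperplanes. -/
def thickness (C : Set (Pt d)) : ℝ := sInf {r | ∃ H, Supports H C ∧ width H C = r}

/-- The diameter of `C`. -/
def diam (C : Set (Pt d)) : ℝ := sSup {r | ∃ a ∈ C, ∃ b ∈ C, hdist a b = r}

/-- A body of constant width `δ`. -/
def ConstWidth (W : Set (Pt d)) (δ : ℝ) : Prop :=
  IsBody W ∧ ∀ H, Supports H W → width H W = δ

/-- A complete set of diameter `δ`. -/
def CompleteSet (C : Set (Pt d)) (δ : ℝ) : Prop :=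
  diam C = δ ∧ ∀ x, x ∉ C → diam (C ∪ {x}) > δ

/-- A body of constant diameter `δ`. -/
def ConstDiam (C : Set (Pt d)) (δ : ℝ) : Prop :=
  diam C = δ ∧ ∀ p, IsBdry C p → ∃ p' ∈ C, hdist p p' = δ



/-! ### Bilinearity of `mink` -/

lemma mink_comm (x y : EuclideanSpace ℝ (Fin (d+1))) : mink d x y = mink d y x := by
  simp [mink, mul_comm]

lemma mink_add_left (x y z : EuclideanSpace ℝ (Fin (d+1))) :
    mink d (x + y) z = mink d x z + mink d y z := by
  simp [mink, add_mul, Finset.sum_add_distrib]; ring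

lemma mink_smul_left (c : ℝ) (x y : EuclideanSpace ℝ (Fin (d+1))) :
    mink d (c • x) y = c * mink d x y := by
  simp [mink, mul_assoc, ← Finset.mul_sum]; ring

lemma mink_sub_left (x y z : EuclideanSpace ℝ (Fin (d+1))) :
    mink d (x - y) z = mink d x z - mink d y z := by
  simp [mink, sub_mul, Finset.sum_sub_distrib]; ring

lemma mink_add_right (x y z : EuclideanSpace ℝ (Fin (d+1))) :
    mink d x (y + z) = mink d x y + mink d x z := by
  rw [mink_comm, mink_add_left, mink_comm z x, mink_comm y x]

lemma mink_smul_right (c : ℝ) (x y : EuclideanSpace ℝ (Fin (d+1))) :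
    mink d x (c • y) = c * mink d x y := by
  rw [mink_comm, mink_smul_left, mink_comm y x]

lemma mink_sub_right (x y z : EuclideanSpace ℝ (Fin (d+1))) :
    mink d x (y - z) = mink d x y - mink d x z := by
  rw [mink_comm, mink_sub_left, mink_comm y x, mink_comm z x]

/-! ### Coordinate lemmas -/

/-- Spatial part of the Minkowski form. -/
def sp (d : ℕ) (x y : EuclideanSpace ℝ (Fin (d + 1))) : ℝ :=
  ∑ i : Fin d, x i.castSucc * y i.castSucc

lemma mink_eq_sp (x y : EuclideanSpace ℝ (Fin (d+1))) :
    mink d x y = sp d x y - x (Fin.last d) * y (Fin.last d) := rfl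

lemma sp_nonneg (x : EuclideanSpace ℝ (Fin (d+1))) : 0 ≤ sp d x x :=
  Finset.sum_nonneg fun i _ => mul_self_nonneg _

lemma sp_comm (x y : EuclideanSpace ℝ (Fin (d+1))) : sp d x y = sp d y x := by
  simp [sp, mul_comm]

lemma sp_cauchy (x y : EuclideanSpace ℝ (Fin (d+1))) :
    (sp d x y)^2 ≤ sp d x x * sp d y y := by
  have h := Finset.sum_mul_sq_le_sq_mul_sq Finset.univ
    (fun i : Fin d => x i.castSucc) (fun i : Fin d => y i.castSucc)
  simpa [sp, sq] using h

/-- A vector Minkowski-orthogonal to a timelike vector is spacelike (or zero). -/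
lemma orth_timelike {x y : EuclideanSpace ℝ (Fin (d+1))}
    (hx : mink d x x < 0) (hxy : mink d x y = 0) :
    0 ≤ mink d y y ∧ (mink d y y = 0 → y = 0) := by
  set xL := x (Fin.last d) with hxLdef
  set yL := y (Fin.last d) with hyLdef
  have hxx : sp d x x - xL * xL < 0 := hx
  have hxy' : sp d x y - xL * yL = 0 := hxy
  have hsx := sp_nonneg x
  have hsy := sp_nonneg y
  have hcs := sp_cauchy x y
  have hxL2 : sp d x x < xL * xL := by linarith
  have hxLne : xL ≠ 0 := by
    intro h; rw [h] at hxL2; nlinarith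
  have hyy : mink d y y = sp d y y - yL * yL := rfl
  have hxy2 : sp d x y = xL * yL := by linarith
  have hxLpos : 0 < xL * xL := mul_self_pos.mpr hxLne
  have h1 : (xL * yL)^2 ≤ sp d x x * sp d y y := by rw [← hxy2]; exact hcs
  have h2 : sp d x x * sp d y y ≤ (xL * xL) * sp d y y :=
    mul_le_mul_of_nonneg_right (le_of_lt hxL2) hsy
  have h3 : yL * yL ≤ sp d y y := by nlinarith
  constructor
  · rw [hyy]; linarith
  · intro h0
    rw [hyy] at h0
    have hspy : sp d y y = 0 := by
      by_contra hne
      have hpos : 0 < sp d y y := lt_of_le_of_ne hsy (Ne.symm hne)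
      have h4 : sp d x x * sp d y y < (xL * xL) * sp d y y :=
        mul_lt_mul_of_pos_right hxL2 hpos
      nlinarith
    have hyL : yL = 0 := by nlinarith
    have hspy' : ∑ j : Fin d, y j.castSucc * y j.castSucc = 0 := hspy
    have hcomp : ∀ i : Fin d, y i.castSucc = 0 := by
      intro i
      have hz := (Finset.sum_eq_zero_iff_of_nonneg
        (fun j (_ : j ∈ Finset.univ) => mul_self_nonneg (y j.castSucc))).mp hspy'
      exact mul_self_eq_zero.mp (hz i (Finset.mem_univ i))
    ext i
    show y i = 0
    rcases Fin.eq_castSucc_or_eq_last i with ⟨j, rfl⟩ | rfl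
    · exact hcomp j
    · exact hyL

/-- Two timelike vectors with negative Minkowski product are on the same sheet. -/
lemma same_sheet {x y : EuclideanSpace ℝ (Fin (d+1))}
    (hx : mink d x x < 0) (hy : mink d y y < 0)
    (hxL : 0 < x (Fin.last d)) (hxy : mink d x y < 0) : 0 < y (Fin.last d) := by
  set xL := x (Fin.last d)
  set yL := y (Fin.last d)
  have hxx : sp d x x - xL * xL < 0 := hx
  have hyy : sp d y y - yL * yL < 0 := hy
  have hxy' : sp d x y - xL * yL < 0 := hxy
  have hsx := sp_nonneg x
  have hsy := sp_nonneg y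
  have hcs := sp_cauchy x y
  by_contra hle
  push_neg at hle
  have hyLneg : yL < 0 := by
    rcases lt_or_eq_of_le hle with h | h
    · exact h
    · exfalso; rw [← h] at hyy; nlinarith
  nlinarith [mul_pos hxL (neg_pos.mpr hyLneg), sq_nonneg (sp d x y)]

/-- Reverse Cauchy–Schwarz: points on the upper unit hyperboloid. -/
lemma mink_le_neg_one (p q : Pt d) : mink d p.1 q.1 ≤ -1 := by
  obtain ⟨hp, hpL⟩ := p.2
  obtain ⟨hq, hqL⟩ := q.2
  set pL := p.1 (Fin.last d)
  set qL := q.1 (Fin.last d)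
  have hpp : sp d p.1 p.1 - pL * pL = -1 := hp
  have hqq : sp d q.1 q.1 - qL * qL = -1 := hq
  have hsp := sp_nonneg p.1
  have hsq := sp_nonneg q.1
  have hcs := sp_cauchy p.1 q.1
  have hgoal : sp d p.1 q.1 - pL * qL ≤ -1 := by
    set S := sp d p.1 q.1
    have hPQ : 0 < pL * qL := mul_pos hpL hqL
    rcases le_or_gt (S + 1) 0 with h | h
    · nlinarith
    · have hab : 2*S ≤ sp d p.1 p.1 + sp d q.1 q.1 := by
        rcases le_or_gt S 0 with hS | hS
        · linarith
        · have h4 : (2*S)^2 ≤ (sp d p.1 p.1 + sp d q.1 q.1)^2 := by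
            nlinarith [hcs, sq_nonneg (sp d p.1 p.1 - sp d q.1 q.1)]
          nlinarith [h4, hS, hsp, hsq]
      have hpL2 : pL * pL = 1 + sp d p.1 p.1 := by linarith
      have hqL2 : qL * qL = 1 + sp d q.1 q.1 := by linarith
      have h1 : (S + 1)^2 ≤ (pL * qL)^2 := by
        have hexp : (pL * qL)^2 = (1 + sp d p.1 p.1) * (1 + sp d q.1 q.1) := by
          rw [← hpL2, ← hqL2]; ring
        nlinarith [hcs, hab, hexp]
      nlinarith [h1, hPQ, h]
  exact hgoal

lemma eq_of_mink_eq_neg_one {p q : Pt d} (h : mink d p.1 q.1 = -1) : p = q := by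
  have hy : mink d p.1 (p.1 - q.1) = 0 := by
    rw [mink_sub_right, p.2.1, h]; ring
  have hyy : mink d (p.1 - q.1) (p.1 - q.1) = 0 := by
    rw [mink_sub_left, mink_sub_right, mink_sub_right, p.2.1, q.2.1,
      mink_comm q.1 p.1, h]; ring
  have := (orth_timelike (x := p.1) (by rw [p.2.1]; norm_num) hy).2 hyy
  exact Subtype.ext (by rwa [sub_eq_zero] at this)

/-! ### `arcosh` lemmas -/

lemma cosh_arcosh {y : ℝ} (hy : 1 ≤ y) : Real.cosh (arcosh y) = y := by
  have h1 : (0:ℝ) ≤ y^2 - 1 := by nlinarith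
  have hs := Real.sq_sqrt h1
  set s := Real.sqrt (y^2 - 1) with hsdef
  have hs0 : 0 ≤ s := Real.sqrt_nonneg _
  have hpos : 0 < y + s := by linarith
  rw [arcosh, Real.cosh_eq, Real.exp_log hpos, Real.exp_neg, Real.exp_log hpos]
  field_simp
  nlinarith

lemma sinh_arcosh {y : ℝ} (hy : 1 ≤ y) : Real.sinh (arcosh y) = Real.sqrt (y^2 - 1) := by
  have h1 : (0:ℝ) ≤ y^2 - 1 := by nlinarith
  have hs := Real.sq_sqrt h1
  set s := Real.sqrt (y^2 - 1) with hsdef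
  have hs0 : 0 ≤ s := Real.sqrt_nonneg _
  have hpos : 0 < y + s := by linarith
  rw [arcosh, Real.sinh_eq, Real.exp_log hpos, Real.exp_neg, Real.exp_log hpos]
  field_simp
  nlinarith

lemma arcosh_nonneg {y : ℝ} (hy : 1 ≤ y) : 0 ≤ arcosh y :=
  Real.log_nonneg (by have := Real.sqrt_nonneg (y^2-1); linarith)

lemma arcosh_le_arcosh {a b : ℝ} (ha : 1 ≤ a) (hab : a ≤ b) : arcosh a ≤ arcosh b := by
  have h1 : (0:ℝ) < a + Real.sqrt (a^2-1) := by
    have := Real.sqrt_nonneg (a^2-1); linarith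
  apply Real.log_le_log h1
  have : Real.sqrt (a^2-1) ≤ Real.sqrt (b^2-1) :=
    Real.sqrt_le_sqrt (by nlinarith)
  linarith

lemma arcosh_inj {a b : ℝ} (ha : 1 ≤ a) (hb : 1 ≤ b) (h : arcosh a = arcosh b) : a = b := by
  rw [← cosh_arcosh ha, h, cosh_arcosh hb]

lemma arcosh_one : arcosh 1 = 0 := by
  simp [arcosh]

lemma arcosh_sqrt_one_add_sq (t : ℝ) :
    arcosh (Real.sqrt (1 + t^2)) = Real.arsinh |t| := by
  have h0 : (0:ℝ) ≤ 1 + t^2 := by positivity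
  have h1 : Real.sqrt (1+t^2) ^ 2 - 1 = t^2 := by rw [Real.sq_sqrt h0]; ring
  rw [arcosh, h1, Real.sqrt_sq_eq_abs, Real.arsinh, sq_abs, add_comm]

/-! ### `hdist` lemmas -/

lemma neg_mink_ge_one (p q : Pt d) : 1 ≤ -(mink d p.1 q.1) := by
  have := mink_le_neg_one p q; linarith

lemma cosh_hdist (p q : Pt d) : Real.cosh (hdist p q) = -(mink d p.1 q.1) :=
  cosh_arcosh (neg_mink_ge_one p q)

lemma hdist_nonneg (p q : Pt d) : 0 ≤ hdist p q :=
  arcosh_nonneg (neg_mink_ge_one p q)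

lemma mink_of_hdist {p q : Pt d} {r : ℝ} (h : hdist p q = r) :
    mink d p.1 q.1 = -Real.cosh r := by
  have := cosh_hdist p q
  rw [h] at this
  linarith

/-! ### Segment structure -/

lemma hdist_eq_zero_iff {p q : Pt d} : hdist p q = 0 ↔ p = q := by
  constructor
  · intro h
    have hc := cosh_hdist p q
    rw [h, Real.cosh_zero] at hc
    exact eq_of_mink_eq_neg_one (by linarith)
  · rintro rfl
    have : mink d p.1 p.1 = -1 := p.2.1
    simp only [hdist, this]
    norm_num
    exact arcosh_one

lemma aux_sumle {lam mu g : ℝ} (hl : 0 ≤ lam) (hm : 0 ≤ mu) (hg : 1 ≤ g)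
    (h : lam*lam*(-1) + (lam*mu + mu*lam)*(-g) + mu*mu*(-1) = -1) : lam + mu ≤ 1 := by
  nlinarith [mul_nonneg (mul_nonneg hl hm) (sub_nonneg.mpr hg), sq_nonneg (lam + mu)]

lemma mink_combo {l1 m1 l2 m2 : ℝ} {a b : EuclideanSpace ℝ (Fin (d+1))} :
    mink d (l1 • a + m1 • b) (l2 • a + m2 • b) =
      l1*l2 * mink d a a + (l1*m2 + m1*l2) * mink d a b + m1*m2 * mink d b b := by
  simp only [mink_add_left, mink_add_right, mink_smul_left, mink_smul_right]
  rw [mink_comm b a]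
  ring

lemma seg_combo {a b p : Pt d} (hp : p ∈ seg a b) :
    ∃ lam mu : ℝ, 0 ≤ lam ∧ 0 ≤ mu ∧ lam + mu ≤ 1 ∧
      p.1 = lam • a.1 + mu • b.1 := by
  have hp' : hdist a p + hdist p b = hdist a b := hp
  set α : ℝ := -(mink d a.1 p.1) with hαdef
  set β : ℝ := -(mink d p.1 b.1) with hβdef
  set γ : ℝ := -(mink d a.1 b.1) with hγdef
  have hα1 : 1 ≤ α := neg_mink_ge_one a p
  have hβ1 : 1 ≤ β := neg_mink_ge_one p b
  have hγ1 : 1 ≤ γ := neg_mink_ge_one a b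
  rcases eq_or_lt_of_le hγ1 with hγeq | hγgt
  · -- degenerate case : a = b
    have hab : a = b := by
      refine eq_of_mink_eq_neg_one ?_
      rw [hγdef] at hγeq
      linarith
    subst hab
    have h0 : hdist a a = 0 := hdist_eq_zero_iff.mpr rfl
    rw [h0] at hp'
    have h1 := hdist_nonneg a p
    have h2 := hdist_nonneg p a
    have h3 : hdist a p = 0 := by linarith
    have : p = a := (hdist_eq_zero_iff.mp h3).symm
    subst this
    exact ⟨1, 0, by norm_num, by norm_num, by norm_num, by simp⟩
  · -- main case
    have hA0 : (0:ℝ) ≤ α^2 - 1 := by nlinarith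
    have hB0 : (0:ℝ) ≤ β^2 - 1 := by nlinarith
    set A := Real.sqrt (α^2 - 1) with hAdef
    set B := Real.sqrt (β^2 - 1) with hBdef
    have hA : A^2 = α^2 - 1 := Real.sq_sqrt hA0
    have hB : B^2 = β^2 - 1 := Real.sq_sqrt hB0
    have hAnn : 0 ≤ A := Real.sqrt_nonneg _
    have hBnn : 0 ≤ B := Real.sqrt_nonneg _
    have key : γ = α * β + A * B := by
      have := congrArg Real.cosh hp'
      rw [Real.cosh_add] at this
      rw [show hdist a p = arcosh α from rfl, show hdist p b = arcosh β from rfl,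
        show hdist a b = arcosh γ from rfl] at this
      rw [cosh_arcosh hα1, cosh_arcosh hβ1, cosh_arcosh hγ1,
        sinh_arcosh hα1, sinh_arcosh hβ1] at this
      rw [← hAdef, ← hBdef] at this
      linarith [this]
    clear_value α β γ A B
    have hden : 0 < γ^2 - 1 := by nlinarith
    set lam := (γ * β - α) / (γ^2 - 1) with hlamdef
    set mu := (γ * α - β) / (γ^2 - 1) with hmudef
    clear_value lam mu
    have hlamnum : γ * β - α = B * (α * B + A * β) := by
      rw [key]; linear_combination (-α) * hB
    have hmunum : γ * α - β = A * (β * A + B * α) := by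
      rw [key]; linear_combination (-β) * hA
    have hlam0 : 0 ≤ lam := by
      rw [hlamdef, hlamnum]
      apply div_nonneg _ (le_of_lt hden)
      have : 0 ≤ α * B + A * β := by positivity
      positivity
    have hmu0 : 0 ≤ mu := by
      rw [hmudef, hmunum]
      apply div_nonneg _ (le_of_lt hden)
      have : 0 ≤ β * A + B * α := by positivity
      positivity
    have hiden : (γ * β - α) * α + (γ * α - β) * β = γ^2 - 1 := by
      rw [key]; linear_combination (-(β^2 - 1)) * hA + (-A^2) * hB
    have hsum : lam * α + mu * β = 1 := by
      rw [hlamdef, hmudef, div_mul_eq_mul_div, div_mul_eq_mul_div,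
        ← add_div, hiden, div_self (ne_of_gt hden)]
    have hla : lam + mu * γ = α := by
      rw [hlamdef, hmudef]; field_simp; ring
    have hlb : lam * γ + mu = β := by
      rw [hlamdef, hmudef]; field_simp; ring
    set e : EuclideanSpace ℝ (Fin (d+1)) := p.1 - lam • a.1 - mu • b.1 with hedef
    clear_value e
    have hea : mink d a.1 e = 0 := by
      rw [hedef, mink_sub_right, mink_sub_right, mink_smul_right, mink_smul_right,
        a.2.1]
      have h1 : mink d a.1 p.1 = -α := by rw [hαdef]; ring
      have h2 : mink d a.1 b.1 = -γ := by rw [hγdef]; ring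
      rw [h1, h2]; linarith [hla]
    have heb : mink d b.1 e = 0 := by
      rw [hedef, mink_sub_right, mink_sub_right, mink_smul_right, mink_smul_right,
        b.2.1]
      have h1 : mink d b.1 p.1 = -β := by rw [hβdef, mink_comm]; ring
      have h2 : mink d b.1 a.1 = -γ := by rw [hγdef, mink_comm]; ring
      rw [h1, h2]; linarith [hlb]
    have hee : mink d e e = 0 := by
      have hep : mink d e p.1 = mink d e e := by
        have : mink d e (p.1 - e) = lam * mink d e a.1 + mu * mink d e b.1 := by
          rw [hedef]
          have : p.1 - (p.1 - lam • a.1 - mu • b.1) = lam • a.1 + mu • b.1 := by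
            abel
          rw [this, mink_add_right, mink_smul_right, mink_smul_right]
        rw [mink_sub_right] at this
        rw [mink_comm e a.1] at this
        rw [mink_comm e b.1] at this
        rw [hea, heb] at this
        linarith
      have hpe : mink d p.1 e = mink d p.1 p.1 - lam * mink d p.1 a.1
          - mu * mink d p.1 b.1 := by
        rw [hedef, mink_sub_right, mink_sub_right, mink_smul_right, mink_smul_right]
      rw [p.2.1] at hpe
      have h1 : mink d p.1 a.1 = -α := by rw [hαdef, mink_comm]; ring
      have h2 : mink d p.1 b.1 = -β := by rw [hβdef]; ring
      rw [h1, h2] at hpe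
      rw [mink_comm] at hep
      rw [hep] at hpe
      rw [hpe]
      linarith [hsum]
    have he0 : e = 0 :=
      (orth_timelike (x := a.1) (by rw [a.2.1]; norm_num) hea).2 hee
    have hpeq : p.1 = lam • a.1 + mu • b.1 := by
      have h := he0
      rw [hedef, sub_sub, sub_eq_zero] at h
      exact h
    have hab' : mink d a.1 b.1 = -γ := by rw [hγdef]; ring
    have hexp : lam*lam*(-1) + (lam*mu + mu*lam)*(-γ) + mu*mu*(-1) = -1 := by
      have h := p.2.1
      rw [hpeq, mink_combo, a.2.1, b.2.1, hab'] at h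
      exact h
    exact ⟨lam, mu, hlam0, hmu0, aux_sumle hlam0 hmu0 hγ1 hexp, hpeq⟩

/-! ### Distance to a hyperplane -/

/-- The orthogonal projection of `p` on the hyperplane `plane ν`. -/
lemma proj_plane {ν : EuclideanSpace ℝ (Fin (d+1))} (hν : mink d ν ν = 1) (p : Pt d) :
    ∃ q : Pt d, q ∈ plane ν ∧
      mink d p.1 q.1 = -Real.sqrt (1 + (mink d ν p.1)^2) ∧
      q.1 = (Real.sqrt (1 + (mink d ν p.1)^2))⁻¹ • (p.1 - (mink d ν p.1) • ν) := by
  set t := mink d ν p.1 with htdef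
  set r := Real.sqrt (1 + t^2) with hrdef
  have hr2 : r^2 = 1 + t^2 := Real.sq_sqrt (by positivity)
  have hr1 : 1 ≤ r := by nlinarith [Real.sqrt_nonneg (1 + t^2)]
  have hrpos : 0 < r := by linarith
  set q0 : EuclideanSpace ℝ (Fin (d+1)) := r⁻¹ • (p.1 - t • ν) with hq0def
  have hminkpt : mink d (p.1 - t • ν) (p.1 - t • ν) = -(1 + t^2) := by
    rw [mink_sub_left, mink_sub_right, mink_sub_right, mink_smul_left,
      mink_smul_right, mink_smul_right, mink_smul_left, p.2.1, hν]
    rw [mink_comm p.1 ν, ← htdef]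
    ring
  have hq0q0 : mink d q0 q0 = -1 := by
    rw [hq0def, mink_smul_left, mink_smul_right, hminkpt]
    field_simp
    nlinarith [hr2]
  have hpq0 : mink d p.1 q0 = -r := by
    rw [hq0def, mink_smul_right, mink_sub_right, mink_smul_right, p.2.1,
      mink_comm p.1 ν, ← htdef]
    have : (-1 - t * t) = -(r^2) := by nlinarith [hr2]
    rw [show (-1 - t * (mink d ν p.1)) = -1 - t*t by rw [← htdef]]
    rw [show (-1 : ℝ) - t*t = -(r^2) from by nlinarith [hr2]]
    field_simp
  have hq0L : 0 < q0 (Fin.last d) := by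
    apply same_sheet (x := p.1) (by rw [p.2.1]; norm_num)
      (by rw [hq0q0]; norm_num) p.2.2
    rw [hpq0]; linarith
  have hνq0 : mink d ν q0 = 0 := by
    rw [hq0def, mink_smul_right, mink_sub_right, mink_smul_right, hν, ← htdef]
    ring
  exact ⟨⟨q0, hq0q0, hq0L⟩, hνq0, hpq0, rfl⟩

/-- Lower bound for the Minkowski pairing with points of a hyperplane. -/
lemma mink_le_plane {ν : EuclideanSpace ℝ (Fin (d+1))} (hν : mink d ν ν = 1) (p k : Pt d) (hk : k ∈ plane ν) :
    mink d p.1 k.1 ≤ -Real.sqrt (1 + (mink d ν p.1)^2) := by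
  obtain ⟨q, hqmem, hpq, hqeq⟩ := proj_plane hν p
  set t := mink d ν p.1 with htdef
  set r := Real.sqrt (1 + t^2) with hrdef
  have hr2 : r^2 = 1 + t^2 := Real.sq_sqrt (by positivity)
  have hrpos : 0 < r := by nlinarith [Real.sqrt_nonneg (1 + t^2)]
  have hqk : mink d q.1 k.1 ≤ -1 := mink_le_neg_one q k
  have hkplane : mink d ν k.1 = 0 := hk
  have hdecomp : mink d p.1 k.1 = r * mink d q.1 k.1 + t * mink d ν k.1 := by
    have hp : p.1 = r • q.1 + t • ν := by
      rw [hqeq, smul_smul]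
      rw [mul_inv_cancel₀ (ne_of_gt hrpos), one_smul]
      abel
    rw [show mink d p.1 k.1 = mink d (r • q.1 + t • ν) k.1 from by rw [← hp]]
    rw [mink_add_left, mink_smul_left, mink_smul_left]
  rw [hdecomp, hkplane]
  nlinarith [hqk, hrpos]

/-- Equality case: the projection is the unique closest point. -/
lemma mink_plane_eq_iff {ν : EuclideanSpace ℝ (Fin (d+1))} (hν : mink d ν ν = 1) (p k : Pt d) (hk : k ∈ plane ν)
    (heq : mink d p.1 k.1 = -Real.sqrt (1 + (mink d ν p.1)^2)) :
    k.1 = (Real.sqrt (1 + (mink d ν p.1)^2))⁻¹ • (p.1 - (mink d ν p.1) • ν) := by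
  obtain ⟨q, hqmem, hpq, hqeq⟩ := proj_plane hν p
  set t := mink d ν p.1 with htdef
  set r := Real.sqrt (1 + t^2) with hrdef
  have hr2 : r^2 = 1 + t^2 := Real.sq_sqrt (by positivity)
  have hrpos : 0 < r := by nlinarith [Real.sqrt_nonneg (1 + t^2)]
  have hkplane : mink d ν k.1 = 0 := hk
  have hdecomp : mink d p.1 k.1 = r * mink d q.1 k.1 + t * mink d ν k.1 := by
    have hp : p.1 = r • q.1 + t • ν := by
      rw [hqeq, smul_smul]
      rw [mul_inv_cancel₀ (ne_of_gt hrpos), one_smul]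
      abel
    rw [show mink d p.1 k.1 = mink d (r • q.1 + t • ν) k.1 from by rw [← hp]]
    rw [mink_add_left, mink_smul_left, mink_smul_left]
  rw [hdecomp, hkplane] at heq
  have hqk : mink d q.1 k.1 = -1 := by
    have h1 : r * mink d q.1 k.1 = r * (-1) := by linarith [heq]
    exact mul_left_cancel₀ (ne_of_gt hrpos) h1
  have : q = k := eq_of_mink_eq_neg_one hqk
  rw [← this, hqeq]

/-- Distance from a point to a hyperplane. -/
lemma distPS_plane {ν : EuclideanSpace ℝ (Fin (d+1))} (hν : mink d ν ν = 1) (p : Pt d) :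
    distPS p (plane ν) = Real.arsinh |mink d ν p.1| := by
  obtain ⟨q, hqmem, hpq, _⟩ := proj_plane hν p
  set t := mink d ν p.1 with htdef
  set r := Real.sqrt (1 + t^2) with hrdef
  have hr2 : r^2 = 1 + t^2 := Real.sq_sqrt (by positivity)
  have hr1 : 1 ≤ r := by nlinarith [Real.sqrt_nonneg (1 + t^2)]
  have harc : arcosh r = Real.arsinh |t| := arcosh_sqrt_one_add_sq t
  have hdq : hdist p q = Real.arsinh |t| := by
    rw [hdist, hpq, ← harc]
    norm_num
  have hlb : ∀ y ∈ hdist p '' (plane ν), Real.arsinh |t| ≤ y := by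
    rintro y ⟨k, hkmem, rfl⟩
    rw [← harc, hdist]
    apply arcosh_le_arcosh hr1
    have := mink_le_plane hν p k hkmem
    rw [← htdef, ← hrdef] at this
    linarith
  have hmem : Real.arsinh |t| ∈ hdist p '' (plane ν) := ⟨q, hqmem, hdq⟩
  apply le_antisymm
  · exact csInf_le ⟨Real.arsinh |t|, hlb⟩ hmem
  · exact le_csInf ⟨_, hmem⟩ hlb

/-! ### Slab convexity and hull lemmas -/

lemma slab_convex (ν : EuclideanSpace ℝ (Fin (d+1))) (T : ℝ) :
    IsConvexSet {p : Pt d | |mink d ν p.1| ≤ T} := by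
  intro a ha b hb p hp
  obtain ⟨lam, mu, hl, hm, hlm, hpeq⟩ := seg_combo hp
  have ha' : |mink d ν a.1| ≤ T := ha
  have hb' : |mink d ν b.1| ≤ T := hb
  show |mink d ν p.1| ≤ T
  rw [hpeq, mink_add_right, mink_smul_right, mink_smul_right]
  calc |lam * mink d ν a.1 + mu * mink d ν b.1|
      ≤ |lam * mink d ν a.1| + |mu * mink d ν b.1| := abs_add_le _ _
    _ = lam * |mink d ν a.1| + mu * |mink d ν b.1| := by
        rw [abs_mul, abs_mul, abs_of_nonneg hl, abs_of_nonneg hm]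
    _ ≤ lam * T + mu * T :=
        add_le_add (mul_le_mul_of_nonneg_left ha' hl) (mul_le_mul_of_nonneg_left hb' hm)
    _ = (lam + mu) * T := by ring
    _ ≤ T := by
        have hT : 0 ≤ T := le_trans (abs_nonneg _) ha'
        nlinarith

lemma subset_chull (A : Set (Pt d)) : A ⊆ chull A := by
  intro x hx
  rw [chull, Set.mem_sInter]
  rintro C ⟨_, hAC⟩
  exact hAC hx

lemma chull_subset {A C : Set (Pt d)} (hC : IsConvexSet C) (hAC : A ⊆ C) :
    chull A ⊆ C := by
  intro x hx
  rw [chull, Set.mem_sInter] at hx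
  exact hx C ⟨hC, hAC⟩

lemma aux_one_le_sqrt {r t : ℝ} (h : r^2 = 1 + t^2) (h0 : 0 ≤ r) : 1 ≤ r := by
  nlinarith [sq_nonneg t]


set_option maxHeartbeats 1000000 in
/-- Example 4: the width of the regular tetrahedron of edge `2x`
determined by the plane through an edge orthogonal to the common perpendicular
of opposite edges. -/
theorem width_of_regular_tetrahedron_edge (x : ℝ) (hx : 0 < x) (u v w z : Pt 3)
    (huv : hdist u v = 2 * x) (huw : hdist u w = 2 * x) (huz : hdist u z = 2 * x)
    (hvw : hdist v w = 2 * x) (hvz : hdist v z = 2 * x) (hwz : hdist w z = 2 * x)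
    (m n : Pt 3) (hm : m ∈ seg u v) (hum : hdist u m = x)
    (hn : n ∈ seg w z) (hwn : hdist w n = x)
    (H : Set (Pt 3)) (hH : IsHyperplane H) (huH : u ∈ H) (hvH : v ∈ H)
    (hperp : IsProj n H m) :
    width H (chull {u, v, w, z}) =
      Real.arsinh (Real.sinh (arcosh (Real.cosh (2 * x) / (Real.cosh x) ^ 2)) * Real.cosh x) := by
  obtain ⟨ν, hνν, hHeq⟩ := hH
  subst hHeq
  set c : ℝ := Real.cosh x with hcdef
  set c2 : ℝ := Real.cosh (2*x) with hc2def
  have hc1 : 1 < c := Real.one_lt_cosh.mpr (ne_of_gt hx)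
  have hcpos : 0 < c := by linarith
  have hc2gt : 1 < c2 := Real.one_lt_cosh.mpr (by positivity)
  have hc2eq : c2 = 2*c^2 - 1 := by
    have h1 := Real.cosh_two_mul x
    have h2 := Real.cosh_sq_sub_sinh_sq x
    rw [hc2def, hcdef]
    linarith only [h1, h2]
  -- Minkowski products of the vertices
  have Muv : mink 3 u.1 v.1 = -c2 := mink_of_hdist huv
  have Muw : mink 3 u.1 w.1 = -c2 := mink_of_hdist huw
  have Muz : mink 3 u.1 z.1 = -c2 := mink_of_hdist huz
  have Mvw : mink 3 v.1 w.1 = -c2 := mink_of_hdist hvw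
  have Mvz : mink 3 v.1 z.1 = -c2 := mink_of_hdist hvz
  have Mwz : mink 3 w.1 z.1 = -c2 := mink_of_hdist hwz
  -- the midpoint m of uv
  have hmvec : m.1 = (2*c)⁻¹ • (u.1 + v.1) := by
    obtain ⟨la, mb, hla0, hmb0, _, hmeq⟩ := seg_combo hm
    have hmseg : hdist u m + hdist m v = hdist u v := hm
    have hmv : hdist m v = x := by rw [huv, hum] at hmseg; linarith only [hmseg]
    have Mum : mink 3 u.1 m.1 = -c := mink_of_hdist hum
    have Mmv : mink 3 m.1 v.1 = -c := mink_of_hdist hmv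
    have e1 : la*(-1) + mb*(-c2) = -c := by
      have h := Mum
      rw [hmeq, mink_add_right, mink_smul_right, mink_smul_right, u.2.1, Muv] at h
      linarith only [h]
    have e2 : la*(-c2) + mb*(-1) = -c := by
      have h := Mmv
      rw [hmeq, mink_add_left, mink_smul_left, mink_smul_left, Muv, v.2.1] at h
      linarith only [h]
    have h3 : (la - mb) * (c2 - 1) = 0 := by linear_combination e1 - e2
    have hlab : la = mb := by
      rcases mul_eq_zero.mp h3 with h | h
      · linarith
      · linarith
    rw [← hlab] at e1
    have h4 : la * (2*c^2) = c := by
      rw [hc2eq] at e1; linarith only [e1]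
    have h7 : la = (2*c)⁻¹ := by
      field_simp
      refine mul_right_cancel₀ (ne_of_gt hcpos) ?_
      linarith only [h4]
    rw [hmeq, ← hlab, h7, smul_add]
  -- the midpoint n of wz
  have hnvec : n.1 = (2*c)⁻¹ • (w.1 + z.1) := by
    obtain ⟨la, mb, hla0, hmb0, _, hneq⟩ := seg_combo hn
    have hnseg : hdist w n + hdist n z = hdist w z := hn
    have hnz : hdist n z = x := by rw [hwz, hwn] at hnseg; linarith only [hnseg]
    have Mwn : mink 3 w.1 n.1 = -c := mink_of_hdist hwn
    have Mnz : mink 3 n.1 z.1 = -c := mink_of_hdist hnz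
    have e1 : la*(-1) + mb*(-c2) = -c := by
      have h := Mwn
      rw [hneq, mink_add_right, mink_smul_right, mink_smul_right, w.2.1, Mwz] at h
      linarith only [h]
    have e2 : la*(-c2) + mb*(-1) = -c := by
      have h := Mnz
      rw [hneq, mink_add_left, mink_smul_left, mink_smul_left, Mwz, z.2.1] at h
      linarith only [h]
    have h3 : (la - mb) * (c2 - 1) = 0 := by linear_combination e1 - e2
    have hlab : la = mb := by
      rcases mul_eq_zero.mp h3 with h | h
      · linarith
      · linarith
    rw [← hlab] at e1
    have h4 : la * (2*c^2) = c := by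
      rw [hc2eq] at e1; linarith only [e1]
    have h7 : la = (2*c)⁻¹ := by
      field_simp
      refine mul_right_cancel₀ (ne_of_gt hcpos) ?_
      linarith only [h4]
    rw [hneq, ← hlab, h7, smul_add]
  have hnz : hdist n z = x := by
    have hnseg : hdist w n + hdist n z = hdist w z := hn
    rw [hwz, hwn] at hnseg; linarith only [hnseg]
  -- mink m n
  have Mmn : mink 3 m.1 n.1 = -(c2/c^2) := by
    rw [hmvec, hnvec, mink_smul_left, mink_smul_right, mink_add_left,
      mink_add_right, mink_add_right, Muw, Muz, Mvw, Mvz]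
    field_simp
    ring
  have hcsq : 1 < c^2 := one_lt_pow₀ hc1 (by norm_num)
  have hcc : 1 < c2/c^2 := by
    rw [lt_div_iff₀ (by positivity)]
    linarith only [hc2eq, hcsq]
  -- the normal direction analysis
  obtain ⟨hmH, hmin⟩ := hperp
  have hmH' : mink 3 ν m.1 = 0 := hmH
  set t : ℝ := mink 3 ν n.1 with htdef
  set r : ℝ := Real.sqrt (1 + t^2) with hrdef
  have hr2 : r^2 = 1 + t^2 := Real.sq_sqrt (by positivity)
  have hr1 : 1 ≤ r := aux_one_le_sqrt hr2 (Real.sqrt_nonneg _)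
  obtain ⟨q, hqmem, hnq, hqeq⟩ := proj_plane hνν n
  have hlow : mink 3 n.1 m.1 ≤ -r := mink_le_plane hνν n m hmH
  have hnm : mink 3 n.1 m.1 = -(c2/c^2) := by rw [mink_comm]; exact Mmn
  have hrle : r ≤ c2/c^2 := by rw [hnm] at hlow; linarith only [hlow]
  have hup : hdist n m ≤ hdist n q := hmin q hqmem
  have hdnm : hdist n m = arcosh (c2/c^2) := by
    rw [hdist, hnm]; norm_num
  have hdnq : hdist n q = arcosh r := by
    rw [hdist, hnq]; norm_num; rfl
  have hreq : c2/c^2 = r := by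
    rw [hdnm, hdnq] at hup
    have h1 : arcosh r ≤ arcosh (c2/c^2) := arcosh_le_arcosh hr1 hrle
    exact arcosh_inj (le_of_lt hcc) hr1 (le_antisymm hup h1)
  have hmproj : m.1 = r⁻¹ • (n.1 - t • ν) :=
    mink_plane_eq_iff hνν n m hmH (by rw [hnm, hreq])
  have hrpos : 0 < r := by linarith only [hr1]
  have hnvec2 : n.1 = t • ν + r • m.1 := by
    rw [hmproj, smul_smul, mul_inv_cancel₀ (ne_of_gt hrpos), one_smul]
    abel
  have ht2 : t^2 = (c2/c^2)^2 - 1 := by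
    rw [hreq]; linarith only [hr2]
  have htne : t ≠ 0 := by
    intro h
    rw [h] at ht2
    norm_num at ht2
    have h2 : 1 < (c2/c^2)^2 := one_lt_pow₀ hcc (by norm_num)
    linarith only [ht2, h2]
  -- the symmetry w ↔ z
  have Msu : mink 3 u.1 (w.1 - z.1) = 0 := by
    rw [mink_sub_right, Muw, Muz]; ring
  have Msv : mink 3 v.1 (w.1 - z.1) = 0 := by
    rw [mink_sub_right, Mvw, Mvz]; ring
  have Msm : mink 3 m.1 (w.1 - z.1) = 0 := by
    rw [hmvec, mink_smul_left, mink_add_left, Msu, Msv]; ring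
  have Mnw : mink 3 n.1 w.1 = -c := by
    rw [mink_comm]; exact mink_of_hdist hwn
  have Mnz' : mink 3 n.1 z.1 = -c := mink_of_hdist hnz
  have Msn : mink 3 n.1 (w.1 - z.1) = 0 := by
    rw [mink_sub_right, Mnw, Mnz']; ring
  have Msν : mink 3 ν (w.1 - z.1) = 0 := by
    have h := Msn
    rw [hnvec2, mink_add_left, mink_smul_left, mink_smul_left, Msm] at h
    have h2 : t * mink 3 ν (w.1 - z.1) = 0 := by linarith only [h]
    rcases mul_eq_zero.mp h2 with h3 | h3
    · exact absurd h3 htne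
    · exact h3
  have hσeq : mink 3 ν w.1 = mink 3 ν z.1 := by
    rw [mink_sub_right] at Msν; linarith only [Msν]
  have hσt : mink 3 ν z.1 = c * t := by
    have h : t = (2*c)⁻¹ * (mink 3 ν w.1 + mink 3 ν z.1) := by
      rw [htdef, hnvec, mink_smul_right, mink_add_right]
    rw [hσeq] at h
    field_simp at h
    linarith only [h]
  have huH' : mink 3 ν u.1 = 0 := huH
  have hvH' : mink 3 ν v.1 = 0 := hvH
  have habs : |mink 3 ν z.1| = c * |t| := by
    rw [hσt, abs_mul, abs_of_pos hcpos]
  -- the hull is contained in the slab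
  have hslab4 : ({u, v, w, z} : Set (Pt 3)) ⊆ {p : Pt 3 | |mink 3 ν p.1| ≤ c * |t|} := by
    intro p hp
    have hT : 0 ≤ c * |t| := by positivity
    rcases hp with rfl | rfl | rfl | rfl
    · show |mink 3 ν p.1| ≤ c * |t|; rw [huH', abs_zero]; exact hT
    · show |mink 3 ν p.1| ≤ c * |t|; rw [hvH', abs_zero]; exact hT
    · show |mink 3 ν p.1| ≤ c * |t|; rw [hσeq, habs]
    · show |mink 3 ν p.1| ≤ c * |t|; rw [habs]
  have hhull : chull {u, v, w, z} ⊆ {p : Pt 3 | |mink 3 ν p.1| ≤ c * |t|} :=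
    chull_subset (slab_convex ν (c * |t|)) hslab4
  -- compute the width
  have hub : ∀ y ∈ (fun p => distPS p (plane ν)) '' chull {u, v, w, z},
      y ≤ Real.arsinh (c * |t|) := by
    rintro y ⟨p, hp, rfl⟩
    show distPS p (plane ν) ≤ Real.arsinh (c * |t|)
    rw [distPS_plane hνν]
    exact Real.arsinh_le_arsinh.mpr (hhull hp)
  have hzmem : z ∈ chull {u, v, w, z} :=
    subset_chull _ (by simp)
  have hzval : distPS z (plane ν) = Real.arsinh (c * |t|) := by
    rw [distPS_plane hνν, habs]
  have hmem : Real.arsinh (c * |t|) ∈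
      (fun p => distPS p (plane ν)) '' chull {u, v, w, z} := ⟨z, hzmem, hzval⟩
  have hwidth : width (plane ν) (chull {u, v, w, z}) = Real.arsinh (c * |t|) := by
    rw [width]
    apply le_antisymm
    · exact csSup_le ⟨_, hmem⟩ hub
    · exact le_csSup ⟨Real.arsinh (c * |t|), fun y hy => hub y hy⟩ hmem
  rw [hwidth]
  -- identify the right-hand side
  have hsinh : Real.sinh (arcosh (c2/c^2)) = Real.sqrt ((c2/c^2)^2 - 1) :=
    sinh_arcosh (le_of_lt hcc)
  have hsqrt : Real.sqrt ((c2/c^2)^2 - 1) = |t| := by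
    rw [← ht2, Real.sqrt_sq_eq_abs]
  rw [hsinh, hsqrt, mul_comm]

end HypSpace
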